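/- For any weakly connected finite directed graph G there exists a spanning tree T of G such that H(G − T) = min over all spanning forests F of G of H(G − F), where H is the unnormalized indegree entropy. -/

import Mathlib

open Finset

variable {V : Type*} [Fintype V] [DecidableEq V]

/-- The undirected simple graph underlying a finite set of directed edges. -/
def undirected (E : Finset (V × V)) : SimpleGraph V :=
  SimpleGraph.fromRel (fun u v => (u, v) ∈ E)

/-- `F` is a spanning forest of the digraph with edge set `E`:
a subset of edges that, ignoring orientations, is acyclic
(no loops, no antiparallel pairs, and the underlying simple graph is acyclic). -/
def IsSpanningForest (E F : Finset (V × V)) : Prop :=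
  F ⊆ E ∧ (undirected F).IsAcyclic ∧ ∀ e ∈ F, e.1 ≠ e.2 ∧ (e.2, e.1) ∉ F

/-- A spanning tree is a spanning forest with `|V| - 1` edges. -/
def IsSpanningTree (E T : Finset (V × V)) : Prop :=
  IsSpanningForest E T ∧ T.card = Fintype.card V - 1

/-- Unnormalized indegree entropy of the digraph with edge set `K`. -/
noncomputable def indegEntropy (K : Finset (V × V)) : ℝ :=
  ∑ v : V, (((K.filter (fun e => e.2 = v)).card : ℝ)) *
    Real.logb 2 ((K.card : ℝ) / ((K.filter (fun e => e.2 = v)).card : ℝ))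

/-! ### Auxiliary entropy lemmas -/

noncomputable def Hlog (K : Finset (V × V)) : ℝ :=
  (K.card : ℝ) * Real.log (K.card) -
    ∑ v : V, ((K.filter (fun e => e.2 = v)).card : ℝ) *
      Real.log ((K.filter (fun e => e.2 = v)).card)

lemma sum_indeg (K : Finset (V × V)) :
    ∑ v : V, (K.filter (fun e => e.2 = v)).card = K.card :=
  (Finset.card_eq_sum_card_fiberwise (f := Prod.snd) (t := Finset.univ)
    (fun _ _ => Finset.mem_univ _)).symm

lemma indegEntropy_eq (K : Finset (V × V)) : indegEntropy K = Hlog K / Real.log 2 := by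
  unfold indegEntropy Hlog
  rw [sub_div, Finset.sum_div]
  have hm : ((K.card:ℝ) * Real.log K.card) / Real.log 2
      = ∑ v : V, ((K.filter (fun e => e.2 = v)).card : ℝ) * (Real.log K.card / Real.log 2) := by
    rw [← Finset.sum_mul]
    have : (∑ v : V, ((K.filter (fun e => e.2 = v)).card : ℝ)) = (K.card : ℝ) := by
      exact_mod_cast congrArg (Nat.cast : ℕ → ℝ) (sum_indeg K)
    rw [this]; ring
  rw [hm, ← Finset.sum_sub_distrib]
  apply Finset.sum_congr rfl
  intro v _
  set d := (K.filter (fun e => e.2 = v)).card with hd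
  rcases Nat.eq_zero_or_pos d with h0 | hpos
  · simp [h0]
  · have hdK : d ≤ K.card := Finset.card_le_card (Finset.filter_subset _ _)
    have hK : 0 < K.card := lt_of_lt_of_le hpos hdK
    rw [Real.logb, Real.log_div (by positivity) (by positivity)]
    ring

lemma mul_log_slope {x y : ℝ} (hx : 1 ≤ x) (hxy : x ≤ y) :
    x * Real.log x - (x-1) * Real.log (x-1) ≤ y * Real.log y - (y-1) * Real.log (y-1) := by
  rcases eq_or_lt_of_le hxy with rfl | hlt
  · exact le_refl _
  set f : ℝ → ℝ := fun t => t * Real.log t with hf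
  have hc := Real.convexOn_mul_log
  have hm1 : (x - 1 : ℝ) ∈ Set.Ici (0:ℝ) := by simp; linarith
  have hxm : (x : ℝ) ∈ Set.Ici (0:ℝ) := by simp; linarith
  have hym : (y : ℝ) ∈ Set.Ici (0:ℝ) := by simp; linarith
  have hym1 : (y - 1 : ℝ) ∈ Set.Ici (0:ℝ) := by simp; linarith
  have h1 : (f x - f (x-1)) / (x - (x-1)) ≤ (f y - f (x-1)) / (y - (x-1)) :=
    hc.secant_mono hm1 hxm hym (by linarith) (by linarith) hxy
  have h2 : (f (x-1) - f y) / ((x-1) - y) ≤ (f (y-1) - f y) / ((y-1) - y) :=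
    hc.secant_mono hym hm1 hym1 (by linarith) (by linarith) (by linarith)
  have he : (f y - f (x-1)) / (y - (x-1)) = (f (x-1) - f y) / ((x-1) - y) := by
    rw [← neg_div_neg_eq]; ring_nf
  have d1 : x - (x-1) = 1 := by ring
  have d2 : (y-1) - y = -1 := by ring
  rw [d1, div_one] at h1
  rw [d2] at h2
  rw [he] at h1
  have h3 : f x - f (x-1) ≤ (f (y-1) - f y) / (-1) := le_trans h1 h2
  rw [div_neg, div_one] at h3
  simp only [hf] at h3
  linarith

lemma Hlog_erase_le {K : Finset (V × V)} {e : V × V} (he : e ∈ K) :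
    Hlog (K.erase e) ≤ Hlog K := by
  classical
  set w := e.2 with hw
  set d := (K.filter (fun x => x.2 = w)).card with hd
  have hed : e ∈ K.filter (fun x => x.2 = w) := by simp [he, hw]
  have hd1 : 1 ≤ d := Finset.card_pos.mpr ⟨e, hed⟩
  have hdm : d ≤ K.card := Finset.card_le_card (Finset.filter_subset _ _)
  have hm1 : 1 ≤ K.card := le_trans hd1 hdm
  have hcard : (K.erase e).card = K.card - 1 := Finset.card_erase_of_mem he
  have hfilter : ∀ v : V, (K.erase e).filter (fun x => x.2 = v)
      = (K.filter (fun x => x.2 = v)).erase e := by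
    intro v; ext x; simp [Finset.mem_erase, Finset.mem_filter]; tauto
  have hcard_v : ∀ v : V, v ≠ w →
      ((K.erase e).filter (fun x => x.2 = v)).card = (K.filter (fun x => x.2 = v)).card := by
    intro v hv
    rw [hfilter v, Finset.erase_eq_of_notMem]
    simp [Finset.mem_filter, hw]; intro _; exact fun h => hv h.symm
  have hcard_w : ((K.erase e).filter (fun x => x.2 = w)).card = d - 1 := by
    rw [hfilter w, Finset.card_erase_of_mem hed]
  unfold Hlog
  rw [hcard]
  have hsplit : ∀ (g : V → ℝ), ∑ v : V, g v = g w + ∑ v ∈ Finset.univ.erase w, g v := by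
    intro g
    rw [Finset.add_sum_erase _ g (Finset.mem_univ w)]
  rw [hsplit (fun v => ((K.erase e |>.filter (fun x => x.2 = v)).card : ℝ) * Real.log _),
      hsplit (fun v => ((K.filter (fun x => x.2 = v)).card : ℝ) * Real.log _)]
  have hsame : ∑ v ∈ Finset.univ.erase w,
      (((K.erase e).filter (fun x => x.2 = v)).card : ℝ) *
        Real.log (((K.erase e).filter (fun x => x.2 = v)).card)
      = ∑ v ∈ Finset.univ.erase w,
      ((K.filter (fun x => x.2 = v)).card : ℝ) *
        Real.log ((K.filter (fun x => x.2 = v)).card) := by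
    apply Finset.sum_congr rfl
    intro v hv
    rw [hcard_v v (Finset.ne_of_mem_erase hv)]
  rw [hsame, hcard_w]
  have hcm : ((K.card - 1 : ℕ) : ℝ) = (K.card : ℝ) - 1 := by
    rw [Nat.cast_sub hm1]; simp
  have hcd : ((d - 1 : ℕ) : ℝ) = (d : ℝ) - 1 := by
    rw [Nat.cast_sub hd1]; simp
  rw [hcm, hcd]
  have key := mul_log_slope (x := (d:ℝ)) (y := (K.card:ℝ))
    (by exact_mod_cast hd1) (by exact_mod_cast hdm)
  linarith

lemma Hlog_mono {K K' : Finset (V × V)} (h : K ⊆ K') : Hlog K ≤ Hlog K' := by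
  classical
  suffices H : ∀ n (K' : Finset (V × V)), K ⊆ K' → (K' \ K).card = n → Hlog K ≤ Hlog K' from
    H _ K' h rfl
  intro n
  induction n with
  | zero =>
    intro K' h hn
    have : K' = K := by
      have : K' \ K = ∅ := Finset.card_eq_zero.mp hn
      apply Finset.Subset.antisymm _ h
      intro x hx
      by_contra hxK
      exact absurd (Finset.mem_sdiff.mpr ⟨hx, hxK⟩) (by simp [this])
    simp [this]
  | succ n ih =>
    intro K' h hn
    have hne : (K' \ K).Nonempty := by rw [← Finset.card_pos, hn]; omega
    obtain ⟨e, hes⟩ := hne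
    rw [Finset.mem_sdiff] at hes
    have h1 : K ⊆ K'.erase e := fun x hx =>
      Finset.mem_erase.mpr ⟨fun hh => hes.2 (hh ▸ hx), h hx⟩
    have h2 : (K'.erase e \ K).card = n := by
      have : K'.erase e \ K = (K' \ K).erase e := by
        ext x; simp [Finset.mem_erase, Finset.mem_sdiff]; tauto
      rw [this, Finset.card_erase_of_mem (Finset.mem_sdiff.mpr hes), hn]; omega
    exact le_trans (ih _ h1 h2) (Hlog_erase_le hes.1)

lemma indegEntropy_mono {K K' : Finset (V × V)} (h : K ⊆ K') :
    indegEntropy K ≤ indegEntropy K' := by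
  rw [indegEntropy_eq, indegEntropy_eq]
  exact (div_le_div_iff_of_pos_right (Real.log_pos one_lt_two)).mpr (Hlog_mono h)

/-! ### Auxiliary graph lemmas -/

lemma undirected_adj {F : Finset (V × V)} {x y : V} :
    (undirected F).Adj x y ↔ x ≠ y ∧ ((x, y) ∈ F ∨ (y, x) ∈ F) := by
  simp [undirected, SimpleGraph.fromRel_adj]

lemma undirected_empty : undirected (∅ : Finset (V × V)) = ⊥ := by
  ext x y; simp [undirected_adj]

lemma undirected_insert {F : Finset (V × V)} {a b : V} :
    undirected (insert (a, b) F) = undirected F ⊔ SimpleGraph.edge a b := by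
  ext x y
  simp only [undirected_adj, SimpleGraph.sup_adj, SimpleGraph.edge_adj,
    Finset.mem_insert, Prod.mk.injEq, Prod.ext_iff]
  constructor
  · rintro ⟨hne, (⟨h1, h2⟩ | h) | (⟨h1, h2⟩ | h)⟩
    · exact Or.inr ⟨Or.inl ⟨h1, h2⟩, hne⟩
    · exact Or.inl ⟨hne, Or.inl h⟩
    · exact Or.inr ⟨Or.inr ⟨h2, h1⟩, hne⟩
    · exact Or.inl ⟨hne, Or.inr h⟩
  · rintro (⟨hne, h | h⟩ | ⟨⟨h1, h2⟩ | ⟨h1, h2⟩, hne⟩)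
    · exact ⟨hne, Or.inl (Or.inr h)⟩
    · exact ⟨hne, Or.inr (Or.inr h)⟩
    · exact ⟨hne, Or.inl (Or.inl ⟨h1, h2⟩)⟩
    · exact ⟨hne, Or.inr (Or.inl ⟨h2, h1⟩)⟩

lemma sup_edge_isAcyclic {G : SimpleGraph V} {a b : V} (hG : G.IsAcyclic)
    (hne : a ≠ b) (hreach : ¬ G.Reachable a b) :
    (G ⊔ SimpleGraph.edge a b).IsAcyclic := by
  intro v c hc
  have hle : ((G ⊔ SimpleGraph.edge a b) \ SimpleGraph.fromEdgeSet {s(a, b)}) ≤ G := by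
    intro x y hxy
    rw [SimpleGraph.sdiff_adj, SimpleGraph.sup_adj] at hxy
    obtain ⟨h1 | h1, h2⟩ := hxy
    · exact h1
    · exfalso
      apply h2
      rw [SimpleGraph.fromEdgeSet_adj]
      rw [SimpleGraph.edge_adj] at h1
      refine ⟨?_, h1.2⟩
      rcases h1.1 with ⟨rfl, rfl⟩ | ⟨rfl, rfl⟩
      · rfl
      · exact Sym2.eq_swap
  have hbridge : (G ⊔ SimpleGraph.edge a b).IsBridge s(a, b) := by
    rw [SimpleGraph.isBridge_iff]
    exact fun hr => hreach (hr.mono hle)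
  have hmem := hbridge.notMem_edges_of_isCycle hc
  have hsub : ∀ e ∈ c.edges, e ∈ G.edgeSet := by
    intro e he
    have := c.edges_subset_edgeSet he
    rw [SimpleGraph.edgeSet_sup] at this
    rcases this with h | h
    · exact h
    · rw [SimpleGraph.edge_edgeSet_of_ne hne] at h
      exact absurd (h ▸ he) hmem
  exact hG (c.transfer G hsub) (hc.transfer hsub)

lemma undirected_card {F : Finset (V × V)}
    (hF : ∀ e ∈ F, e.1 ≠ e.2 ∧ (e.2, e.1) ∉ F) [Fintype (undirected F).edgeSet] :
    (undirected F).edgeFinset.card = F.card := by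
  symm
  apply Finset.card_bij (fun e _ => s(e.1, e.2))
  · intro e he
    rw [SimpleGraph.mem_edgeFinset, SimpleGraph.mem_edgeSet, undirected_adj]
    exact ⟨(hF e he).1, Or.inl (by simpa using he)⟩
  · intro e1 h1 e2 h2 heq
    rw [Sym2.eq_iff] at heq
    rcases heq with ⟨ha, hb⟩ | ⟨ha, hb⟩
    · exact Prod.ext ha hb
    · exfalso
      apply (hF e1 h1).2
      have : e2 = (e1.2, e1.1) := Prod.ext hb.symm ha.symm
      exact this ▸ h2
  · intro e he
    rw [SimpleGraph.mem_edgeFinset] at he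
    induction e with
    | _ x y =>
      rw [SimpleGraph.mem_edgeSet, undirected_adj] at he
      rcases he.2 with h | h
      · exact ⟨(x, y), h, rfl⟩
      · exact ⟨(y, x), h, Sym2.eq_swap⟩

lemma insert_forest {E F : Finset (V × V)} {a b : V} (hF : IsSpanningForest E F)
    (hE : (a, b) ∈ E) (hab : a ≠ b) (hnr : ¬ (undirected F).Reachable a b) :
    IsSpanningForest E (insert (a, b) F) ∧ F.card < (insert (a, b) F).card := by
  have hab_not : (a, b) ∉ F := fun h =>
    hnr (SimpleGraph.Adj.reachable (undirected_adj.mpr ⟨hab, Or.inl h⟩))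
  have hba_not : (b, a) ∉ F := fun h =>
    hnr (SimpleGraph.Adj.reachable (undirected_adj.mpr ⟨hab, Or.inr h⟩))
  refine ⟨⟨Finset.insert_subset hE hF.1, ?_, ?_⟩, ?_⟩
  · rw [undirected_insert]
    exact sup_edge_isAcyclic hF.2.1 hab hnr
  · intro e he
    rcases Finset.mem_insert.mp he with rfl | heF
    · refine ⟨hab, fun h => ?_⟩
      rcases Finset.mem_insert.mp h with h' | h'
      · exact hab (congrArg Prod.fst h').symm
      · exact hba_not h'
    · refine ⟨(hF.2.2 e heF).1, fun h => ?_⟩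
      rcases Finset.mem_insert.mp h with h' | h'
      · apply hba_not
        have : e = (b, a) := by
          have h1 : e.2 = a := congrArg Prod.fst h'
          have h2 : e.1 = b := congrArg Prod.snd h'
          exact Prod.ext h2 h1
        exact this ▸ heF
      · exact (hF.2.2 e heF).2 h'
  · rw [Finset.card_insert_of_notMem hab_not]
    omega

lemma extend_step {E F : Finset (V × V)} (hconn : (undirected E).Connected)
    (hF : IsSpanningForest E F) (hnc : ¬ (undirected F).Connected) :
    ∃ F', IsSpanningForest E F' ∧ F ⊆ F' ∧ F.card < F'.card := by
  have hnev : Nonempty V := hconn.nonempty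
  have hpre : ¬ (undirected F).Preconnected := by
    intro h
    exact hnc ⟨h⟩
  rw [SimpleGraph.Preconnected] at hpre
  push_neg at hpre
  obtain ⟨u, v, huv⟩ := hpre
  have key : ∃ a b, (undirected E).Adj a b ∧ ¬ (undirected F).Reachable a b := by
    by_contra hno
    push_neg at hno
    have hall : ∀ x y : V, (undirected E).Reachable x y → (undirected F).Reachable x y := by
      intro x y hxy
      obtain ⟨w⟩ := hxy
      induction w with
      | nil => exact SimpleGraph.Reachable.refl _
      | cons h p ih => exact (hno _ _ h).trans ih
    exact huv (hall u v (hconn.preconnected u v))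
  obtain ⟨a, b, hab, hnr⟩ := key
  rw [undirected_adj] at hab
  rcases hab.2 with hE | hE
  · obtain ⟨h1, h2⟩ := insert_forest hF hE hab.1 hnr
    exact ⟨_, h1, Finset.subset_insert _ _, h2⟩
  · obtain ⟨h1, h2⟩ := insert_forest hF hE (Ne.symm hab.1) (fun h => hnr h.symm)
    exact ⟨_, h1, Finset.subset_insert _ _, h2⟩

lemma forest_card_of_connected {F : Finset (V × V)} (hF : (undirected F).IsAcyclic)
    (hcond : ∀ e ∈ F, e.1 ≠ e.2 ∧ (e.2, e.1) ∉ F) (hc : (undirected F).Connected) :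
    F.card = Fintype.card V - 1 := by
  have : Fintype (undirected F).edgeSet := Fintype.ofFinite _
  have htree : (undirected F).IsTree := ⟨hc, hF⟩
  have := htree.card_edgeFinset
  rw [undirected_card hcond] at this
  omega

lemma exists_tree_extension {E : Finset (V × V)} (hconn : (undirected E).Connected) :
    ∀ (k : ℕ) (F : Finset (V × V)), E.card - F.card ≤ k → IsSpanningForest E F →
      ∃ T, IsSpanningTree E T ∧ F ⊆ T := by
  intro k
  induction k with
  | zero =>
    intro F hk hF
    by_cases hc : (undirected F).Connected
    · exact ⟨F, ⟨hF, forest_card_of_connected hF.2.1 hF.2.2 hc⟩, Finset.Subset.refl F⟩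
    · obtain ⟨F', hF', hsub, hlt⟩ := extend_step hconn hF hc
      have := Finset.card_le_card hF'.1
      omega
  | succ k ih =>
    intro F hk hF
    by_cases hc : (undirected F).Connected
    · exact ⟨F, ⟨hF, forest_card_of_connected hF.2.1 hF.2.2 hc⟩, Finset.Subset.refl F⟩
    · obtain ⟨F', hF', hsub, hlt⟩ := extend_step hconn hF hc
      have hle := Finset.card_le_card hF'.1
      obtain ⟨T, hT, hsub'⟩ := ih F' (by omega) hF'
      exact ⟨T, hT, hsub.trans hsub'⟩

lemma empty_forest (E : Finset (V × V)) : IsSpanningForest E (∅ : Finset (V × V)) := by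
  refine ⟨Finset.empty_subset _, ?_, by simp⟩
  rw [undirected_empty]
  exact SimpleGraph.isAcyclic_bot

theorem exists_optimal_spanning_tree (E : Finset (V × V))
    (hconn : (undirected E).Connected) :
    ∃ T, IsSpanningTree E T ∧
      ∀ F, IsSpanningForest E F → indegEntropy (E \ T) ≤ indegEntropy (E \ F) := by
  classical
  set s := E.powerset.filter (fun F => IsSpanningForest E F) with hs
  have hne : s.Nonempty :=
    ⟨∅, Finset.mem_filter.mpr ⟨Finset.empty_mem_powerset E, empty_forest E⟩⟩
  obtain ⟨M, hMs, hMmin⟩ := Finset.exists_min_image s (fun F => indegEntropy (E \ F)) hne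
  have hM : IsSpanningForest E M := (Finset.mem_filter.mp hMs).2
  obtain ⟨T, hT, hMT⟩ := exists_tree_extension hconn E.card M (by omega) hM
  refine ⟨T, hT, fun F hF => ?_⟩
  have h1 : indegEntropy (E \ T) ≤ indegEntropy (E \ M) :=
    indegEntropy_mono (Finset.sdiff_subset_sdiff (Finset.Subset.refl E) hMT)
  exact h1.trans (hMmin F (Finset.mem_filter.mpr ⟨Finset.mem_powerset.mpr hF.1, hF⟩))
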